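/- For every real x > 0, ∫_0^{π/2} I_1(x·cos ϑ) dϑ = (cosh(x) − 1)/x, where I_1(y) = ∑_{m=0}^∞ 1/(m!·Γ(m+2))·(y/2)^{2m+1}. -/

import Mathlib

open Real MeasureTheory

/-- The modified Bessel function of the first kind of order 1, defined by its series. -/
noncomputable def besselI1 (y : ℝ) : ℝ :=
  ∑' m : ℕ, 1 / (m.factorial * Real.Gamma (m + 2)) * (y / 2) ^ (2 * m + 1)

lemma cos_pow_integral (m : ℕ) :
    ∫ θ in (0:ℝ)..(π/2), Real.cos θ ^ (2*m+1)
      = 4^m * ((m.factorial:ℝ))^2 / (2*m+1).factorial := by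
  induction m with
  | zero => simp
  | succ n ih =>
    have e : 2*(n+1)+1 = (2*n+1)+2 := by ring
    rw [e, integral_cos_pow, Real.cos_pi_div_two, Real.sin_zero, ih]
    have h1 : ((2*n+1+2).factorial : ℝ) = (2*n+3) * ((2*n+2) * (2*n+1).factorial) := by
      rw [show 2*n+1+2 = (2*n+2)+1 by ring, Nat.factorial_succ,
        show 2*n+2 = (2*n+1)+1 by ring, Nat.factorial_succ]
      push_cast; ring
    have h2 : (((n+1).factorial : ℝ)) = (n+1) * n.factorial := by
      rw [Nat.factorial_succ]; push_cast; ring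
    rw [h1, h2]
    have hf1 : ((2*n+1).factorial : ℝ) ≠ 0 := by positivity
    have hn : ((n.factorial : ℝ)) ≠ 0 := by positivity
    field_simp
    push_cast
    ring

theorem integral_besselI1 (x : ℝ) (hx : 0 < x) :
    ∫ ϑ in (0:ℝ)..(π / 2), besselI1 (x * Real.cos ϑ)
      = (Real.cosh x - 1) / x := by
  have hπ : (0:ℝ) ≤ π/2 := by positivity
  set F : ℕ → ℝ → ℝ := fun m θ =>
    1/((m.factorial : ℝ) * (m+1).factorial) * (x/2)^(2*m+1) * Real.cos θ ^ (2*m+1) with hF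
  have hbessel : ∀ θ : ℝ, besselI1 (x * Real.cos θ) = ∑' m, F m θ := by
    intro θ
    unfold besselI1
    congr 1; funext m
    have hg : Real.Gamma ((m:ℝ)+2) = ((m+1).factorial : ℝ) := by
      rw [show ((m:ℝ)+2) = ((m+1:ℕ):ℝ)+1 by push_cast; ring, Real.Gamma_nat_eq_factorial]
    rw [hg, show x * Real.cos θ / 2 = (x/2) * Real.cos θ by ring, mul_pow, hF]
    push_cast
    ring
  have hcont : ∀ m, Continuous (F m) := fun m => by
    rw [hF]; fun_prop
  have hInt : ∀ m, IntegrableOn (F m) (Set.Ioc (0:ℝ) (π/2)) volume := fun m =>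
    (hcont m).integrableOn_Ioc
  -- bound for summability
  have hBnd : ∀ m : ℕ, ∫ θ in Set.Ioc (0:ℝ) (π/2), ‖F m θ‖
      ≤ (π/2) * ((x/2) * (x^2/4)^m / m.factorial) := by
    intro m
    have hCpos : (0:ℝ) ≤ (x/2) * (x^2/4)^m / m.factorial := by positivity
    have hpt : ∀ θ ∈ Set.Ioc (0:ℝ) (π/2), ‖F m θ‖ ≤ (x/2) * (x^2/4)^m / m.factorial := by
      intro θ _
      have h1 : ‖F m θ‖ = 1/((m.factorial : ℝ) * (m+1).factorial) * (x/2)^(2*m+1)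
          * |Real.cos θ| ^ (2*m+1) := by
        rw [hF]
        simp only [norm_mul, norm_pow, Real.norm_eq_abs, abs_pow]
        have : |1/((m.factorial : ℝ) * (m+1).factorial)| = 1/((m.factorial : ℝ) * (m+1).factorial) := by
          rw [abs_of_pos]; positivity
        rw [this, abs_of_pos (by positivity : (0:ℝ) < x/2)]
      rw [h1]
      have hc1 : |Real.cos θ| ^ (2*m+1) ≤ 1 :=
        pow_le_one₀ (abs_nonneg _) (Real.abs_cos_le_one θ)
      calc 1/((m.factorial : ℝ) * (m+1).factorial) * (x/2)^(2*m+1) * |Real.cos θ| ^ (2*m+1)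
          ≤ 1/((m.factorial : ℝ) * (m+1).factorial) * (x/2)^(2*m+1) * 1 := by
            apply mul_le_mul_of_nonneg_left hc1 (by positivity)
        _ ≤ (1/(m.factorial : ℝ)) * (x/2)^(2*m+1) := by
            rw [mul_one]
            apply mul_le_mul_of_nonneg_right _ (by positivity)
            rw [div_le_div_iff₀ (by positivity) (by positivity)]
            have : (1:ℝ) ≤ ((m+1).factorial : ℝ) := by
              exact_mod_cast Nat.one_le_iff_ne_zero.mpr (Nat.factorial_ne_zero _)
            have h0 : (0:ℝ) < (m.factorial : ℝ) := by exact_mod_cast Nat.factorial_pos m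
            nlinarith
        _ = (x/2) * (x^2/4)^m / m.factorial := by
            rw [pow_succ, pow_mul]
            have : ((x/2)^2) = x^2/4 := by ring
            rw [this]; ring
    calc ∫ θ in Set.Ioc (0:ℝ) (π/2), ‖F m θ‖
        ≤ ∫ _ in Set.Ioc (0:ℝ) (π/2), ((x/2) * (x^2/4)^m / m.factorial) := by
          apply setIntegral_mono_on (hInt m).norm ((integrableOn_const_iff).mpr (Or.inr (by
            rw [Real.volume_Ioc]; exact ENNReal.ofReal_lt_top))) measurableSet_Ioc hpt
      _ = (π/2) * ((x/2) * (x^2/4)^m / m.factorial) := by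
          rw [setIntegral_const, smul_eq_mul, Real.volume_real_Ioc_of_le hπ, sub_zero]
  have hSum : Summable fun m => ∫ θ in Set.Ioc (0:ℝ) (π/2), ‖F m θ‖ := by
    apply Summable.of_nonneg_of_le
      (fun m => integral_nonneg (fun θ => norm_nonneg _)) hBnd
    have := (Real.summable_pow_div_factorial (x^2/4)).mul_left ((π/2) * (x/2))
    convert this using 2 with m
    case e'_3 => rfl
    ring
  have hswap := MeasureTheory.integral_tsum_of_summable_integral_norm hInt hSum
  rw [intervalIntegral.integral_of_le hπ]
  rw [show (fun θ => besselI1 (x * Real.cos θ)) = fun θ => ∑' m, F m θ from funext hbessel]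
  rw [← hswap]
  have hval : ∀ m : ℕ, ∫ θ in Set.Ioc (0:ℝ) (π/2), F m θ
      = x^(2*m+1) / (2*m+2).factorial := by
    intro m
    rw [← intervalIntegral.integral_of_le hπ, hF]
    simp only
    rw [intervalIntegral.integral_const_mul, cos_pow_integral]
    have h1 : ((2*m+2).factorial : ℝ) = (2*m+2) * (2*m+1).factorial := by
      rw [show 2*m+2 = (2*m+1)+1 by ring, Nat.factorial_succ]; push_cast; ring
    have h2 : (((m+1).factorial : ℝ)) = (m+1) * m.factorial := by
      rw [Nat.factorial_succ]; push_cast; ring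
    rw [h1, h2]
    have hf1 : ((2*m+1).factorial : ℝ) ≠ 0 := by positivity
    have hm : ((m.factorial : ℝ)) ≠ 0 := by positivity
    have h4 : (4:ℝ)^m = 2^(2*m) := by rw [pow_mul]; norm_num
    have h5 : (x/2)^(2*m+1) = x^(2*m+1) / 2^(2*m+1) := by rw [div_pow]
    rw [h4, h5, pow_succ]
    field_simp
    ring
  simp_rw [hval]
  have hc : HasSum (fun n : ℕ => x^(2*n)/(2*n).factorial) (Real.cosh x) :=
    Real.hasSum_cosh x
  have h1 : HasSum (fun n : ℕ => x^(2*(n+1))/((2*(n+1)).factorial : ℝ))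
      (Real.cosh x - 1) := by
    have := (hasSum_nat_add_iff' (f := fun n : ℕ => x^(2*n)/((2*n).factorial : ℝ)) 1).mpr hc
    simpa using this
  have h2 : HasSum (fun n : ℕ => x^(2*n+1)/((2*n+2).factorial : ℝ))
      ((Real.cosh x - 1)/x) := by
    have h3 := h1.div_const x
    convert h3 using 2 with n
    case e'_3 => rfl
    rw [show 2*(n+1) = 2*n+2 by ring, pow_succ]
    field_simp
    ring
  exact h2.tsum_eq
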